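/- Embedding of the total-correctness Hoare logic: for any While statement s and state predicates U and Z, if ⊢t {U} s {Z} is derivable in the state-based total-correctness Hoare logic (with the while-fun rule), then ⊢{U} s {finite ** [Z]} is derivable in the trace-based Hoare logic. -/

import Mathlib

namespace WhileTrace

/-- Program variables. -/
abbrev Var := ℕ
/-- States assign integer values to variables. -/
abbrev State := Var → ℤ
/-- Arithmetic expressions, modelled by their integer value in each state. -/
abbrev Expr := State → ℤ

/-- State update `σ[x ↦ v]`. -/
def update (σ : State) (x : Var) (v : ℤ) : State := Function.update σ x v

/-- Reading an expression as a boolean: `σ ⊨ e`. -/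
def istrue (e : Expr) (σ : State) : Prop := e σ ≠ 0

/-- Traces: nonempty, possibly infinite sequences of states
(a head state together with a possibly infinite sequence of further states). -/
def Trace : Type := State × Stream'.Seq State

/-- The singleton trace `⟨σ⟩`. -/
def Trace.single (σ : State) : Trace := (σ, Stream'.Seq.nil)

/-- The cons trace `σ :: τ`. -/
def Trace.cons (σ : State) (τ : Trace) : Trace := (σ, Stream'.Seq.cons τ.1 τ.2)

/-- The first state of a trace. -/
def Trace.hd (τ : Trace) : State := τ.1

/-- Bisimilarity of traces `τ ≈ τ'`, as a greatest fixed point: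
there is a relation `R` relating the two traces that is consistent with the
coinductive rules `⟨σ⟩ ≈ ⟨σ⟩` and `σ::τ ≈ σ::τ'` whenever `τ ≈ τ'`. -/
def Bisim (τ τ' : Trace) : Prop :=
  ∃ R : Trace → Trace → Prop, R τ τ' ∧
    ∀ a b, R a b →
      (∃ σ, a = Trace.single σ ∧ b = Trace.single σ) ∨
      (∃ σ a' b', a = Trace.cons σ a' ∧ b = Trace.cons σ b' ∧ R a' b')

/-- Finiteness `τ ↓ σ` : `τ` is finite with last state `σ` (inductive). -/
inductive Converges : Trace → State → Prop
  | single (σ : State) : Converges (Trace.single σ) σ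
  | cons (σ' : State) {τ : Trace} {σ : State} :
      Converges τ σ → Converges (Trace.cons σ' τ) σ

/-- Infiniteness of a trace (coinductive, as a greatest fixed point). -/
def InfiniteT (τ : Trace) : Prop :=
  ∃ P : Trace → Prop, P τ ∧ ∀ a, P a → ∃ σ a', a = Trace.cons σ a' ∧ P a'

/-- Statements of the While language. -/
inductive Stmt : Type
  | assign (x : Var) (e : Expr)
  | skip
  | seq (s₀ s₁ : Stmt)
  | ifte (e : Expr) (st sf : Stmt)
  | whileDo (e : Expr) (st : Stmt)

/-- A pair of relations `(E, ES)` is consistent with the rules of evaluation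
and extended evaluation: every claimed evaluation is backed by one of the
coinductive rules, with premises again in `(E, ES)`. -/
def EvalConsistent (E : Stmt → State → Trace → Prop)
    (ES : Stmt → Trace → Trace → Prop) : Prop :=
  (∀ x e σ τ, E (.assign x e) σ τ →
      τ = Trace.cons σ (Trace.single (update σ x (e σ)))) ∧
  (∀ σ τ, E .skip σ τ → τ = Trace.single σ) ∧
  (∀ s₀ s₁ σ τ', E (.seq s₀ s₁) σ τ' → ∃ τ, E s₀ σ τ ∧ ES s₁ τ τ') ∧
  (∀ e st sf σ τ, E (.ifte e st sf) σ τ →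
      (istrue e σ ∧ ES st (Trace.cons σ (Trace.single σ)) τ) ∨
      (¬ istrue e σ ∧ ES sf (Trace.cons σ (Trace.single σ)) τ)) ∧
  (∀ e st σ τ', E (.whileDo e st) σ τ' →
      (istrue e σ ∧ ∃ τ, ES st (Trace.cons σ (Trace.single σ)) τ ∧
        ES (.whileDo e st) τ τ') ∨
      (¬ istrue e σ ∧ τ' = Trace.cons σ (Trace.single σ))) ∧
  (∀ s τ τ', ES s τ τ' →
      (∃ σ, τ = Trace.single σ ∧ E s σ τ') ∨
      (∃ σ τ₀ τ₀', τ = Trace.cons σ τ₀ ∧ τ' = Trace.cons σ τ₀' ∧ ES s τ₀ τ₀'))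

/-- Evaluation `(s,σ) ⇒ τ` : greatest fixed point of the mutual coinductive rules. -/
def Exec (s : Stmt) (σ : State) (τ : Trace) : Prop :=
  ∃ E ES, EvalConsistent E ES ∧ E s σ τ

/-- Extended evaluation `(s,τ) ⇒* τ'`. -/
def ExecSeq (s : Stmt) (τ τ' : Trace) : Prop :=
  ∃ E ES, EvalConsistent E ES ∧ ES s τ τ'

/-- The standard inductive state-based big-step semantics `(s,σ) ⇓ σ'`. -/
inductive BigStep : Stmt → State → State → Prop
  | assign (x : Var) (e : Expr) (σ : State) :
      BigStep (.assign x e) σ (update σ x (e σ))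
  | skip (σ : State) : BigStep .skip σ σ
  | seq {s₀ s₁ : Stmt} {σ σ' σ'' : State} :
      BigStep s₀ σ σ' → BigStep s₁ σ' σ'' → BigStep (.seq s₀ s₁) σ σ''
  | ifTrue {e : Expr} {st sf : Stmt} {σ σ' : State} :
      istrue e σ → BigStep st σ σ' → BigStep (.ifte e st sf) σ σ'
  | ifFalse {e : Expr} {st sf : Stmt} {σ σ' : State} :
      ¬ istrue e σ → BigStep sf σ σ' → BigStep (.ifte e st sf) σ σ'
  | whileTrue {e : Expr} {st : Stmt} {σ σ' σ'' : State} :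
      istrue e σ → BigStep st σ σ' → BigStep (.whileDo e st) σ' σ'' →
      BigStep (.whileDo e st) σ σ''
  | whileFalse {e : Expr} {st : Stmt} {σ : State} :
      ¬ istrue e σ → BigStep (.whileDo e st) σ σ

/-- State predicates. -/
abbrev StatePred := State → Prop
/-- Trace predicates. -/
abbrev TracePred := Trace → Prop

/-- A setoid trace predicate respects bisimilarity. -/
def IsSetoidPred (P : TracePred) : Prop := ∀ τ τ', P τ → Bisim τ τ' → P τ'

/-- The singleton predicate `[U]`. -/
def Sglt (U : StatePred) : TracePred :=
  fun τ => ∃ σ, U σ ∧ τ = Trace.single σ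

/-- The doubleton predicate `⟨U⟩`. -/
def Dup (U : StatePred) : TracePred :=
  fun τ => ∃ σ, U σ ∧ τ = Trace.cons σ (Trace.single σ)

/-- The update predicate `U[x ↦ e]`. -/
def UpdPred (U : StatePred) (x : Var) (e : Expr) : TracePred :=
  fun τ => ∃ σ, U σ ∧ τ = Trace.cons σ (Trace.single (update σ x (e σ)))

/-- `Q follows τ in τ'` (coinductive, as a greatest fixed point). -/
def Follows (Q : TracePred) (τ τ' : Trace) : Prop :=
  ∃ R : Trace → Trace → Prop, R τ τ' ∧
    ∀ a b, R a b →
      (∃ σ, a = Trace.single σ ∧ b.hd = σ ∧ Q b) ∨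
      (∃ σ a' b', a = Trace.cons σ a' ∧ b = Trace.cons σ b' ∧ R a' b')

/-- The chop `P ** Q`. -/
def Chop (P Q : TracePred) : TracePred :=
  fun τ' => ∃ τ, P τ ∧ Follows Q τ τ'

/-- The iteration `P*` (coinductive, as a greatest fixed point). -/
def Iter (P : TracePred) : TracePred := fun τ =>
  ∃ X : TracePred, X τ ∧
    ∀ a, X a → Sglt (fun _ => True) a ∨ ∃ τ₀, P τ₀ ∧ Follows X τ₀ a

/-- `Last P` : states that are the last state of some finite trace satisfying `P`. -/
def Last (P : TracePred) : StatePred := fun σ => ∃ τ, P τ ∧ Converges τ σ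

/-- The trace predicate `finite`. -/
def FiniteT : TracePred := fun τ => ∃ σ, Converges τ σ

/-- Derivability `⊢ {U} s {P}` in the trace-based Hoare logic. -/
inductive THoare : StatePred → Stmt → TracePred → Prop
  | assign (U : StatePred) (x : Var) (e : Expr) :
      THoare U (.assign x e) (UpdPred U x e)
  | skip (U : StatePred) : THoare U .skip (Sglt U)
  | seq {U V : StatePred} {s₀ s₁ : Stmt} {P Q : TracePred} :
      THoare U s₀ (Chop P (Sglt V)) → THoare V s₁ Q →
      THoare U (.seq s₀ s₁) (Chop P Q)
  | ifte {U : StatePred} {e : Expr} {st sf : Stmt} {P : TracePred} :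
      THoare (fun σ => istrue e σ ∧ U σ) st P →
      THoare (fun σ => ¬ istrue e σ ∧ U σ) sf P →
      THoare U (.ifte e st sf) (Chop (Dup U) P)
  | whileDo {U I : StatePred} {e : Expr} {st : Stmt} {P : TracePred} :
      (∀ σ, U σ → I σ) →
      THoare (fun σ => istrue e σ ∧ I σ) st (Chop P (Sglt I)) →
      THoare U (.whileDo e st)
        (Chop (Dup U)
          (Chop (Iter (Chop P (Dup I))) (Sglt (fun σ => ¬ istrue e σ))))
  | conseq {U U' : StatePred} {s : Stmt} {P P' : TracePred} :
      (∀ σ, U σ → U' σ) → THoare U' s P' → (∀ τ, P' τ → P τ) →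
      THoare U s P
  | exist {Z : Type} {U : Z → StatePred} {s : Stmt} {P : Z → TracePred} :
      (∀ z, THoare (U z) s (P z)) →
      THoare (fun σ => ∃ z, U z σ) s (fun τ => ∃ z, P z τ)

/-- Derivability `⊢p {U} s {Z}` in the state-based partial-correctness Hoare logic. -/
inductive PHoare : StatePred → Stmt → StatePred → Prop
  | assign (Z : StatePred) (x : Var) (e : Expr) :
      PHoare (fun σ => Z (update σ x (e σ))) (.assign x e) Z
  | skip (U : StatePred) : PHoare U .skip U
  | seq {U V Z : StatePred} {s₀ s₁ : Stmt} :
      PHoare U s₀ V → PHoare V s₁ Z → PHoare U (.seq s₀ s₁) Z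
  | ifte {U Z : StatePred} {e : Expr} {st sf : Stmt} :
      PHoare (fun σ => istrue e σ ∧ U σ) st Z →
      PHoare (fun σ => ¬ istrue e σ ∧ U σ) sf Z →
      PHoare U (.ifte e st sf) Z
  | whileDo {I : StatePred} {e : Expr} {st : Stmt} :
      PHoare (fun σ => istrue e σ ∧ I σ) st I →
      PHoare I (.whileDo e st) (fun σ => I σ ∧ ¬ istrue e σ)
  | exist {Z : Type} {U V : Z → StatePred} {s : Stmt} :
      (∀ z, PHoare (U z) s (V z)) →
      PHoare (fun σ => ∃ z, U z σ) s (fun σ => ∃ z, V z σ)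
  | conseq {U U' Z Z' : StatePred} {s : Stmt} :
      (∀ σ, U σ → U' σ) → PHoare U' s Z' → (∀ σ, Z' σ → Z σ) →
      PHoare U s Z

/-- Derivability `⊢t {U} s {Z}` in the state-based total-correctness Hoare
logic, with the `while-fun` rule. -/
inductive TotHoare : StatePred → Stmt → StatePred → Prop
  | assign (Z : StatePred) (x : Var) (e : Expr) :
      TotHoare (fun σ => Z (update σ x (e σ))) (.assign x e) Z
  | skip (U : StatePred) : TotHoare U .skip U
  | seq {U V Z : StatePred} {s₀ s₁ : Stmt} :
      TotHoare U s₀ V → TotHoare V s₁ Z → TotHoare U (.seq s₀ s₁) Z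
  | ifte {U Z : StatePred} {e : Expr} {st sf : Stmt} :
      TotHoare (fun σ => istrue e σ ∧ U σ) st Z →
      TotHoare (fun σ => ¬ istrue e σ ∧ U σ) sf Z →
      TotHoare U (.ifte e st sf) Z
  | whileFun {I : StatePred} {e : Expr} {st : Stmt} (t : State → ℕ) (m : ℕ) :
      (∀ n : ℕ, TotHoare (fun σ => istrue e σ ∧ I σ ∧ t σ = n) st
        (fun σ => I σ ∧ t σ < n)) →
      TotHoare (fun σ => I σ ∧ t σ = m) (.whileDo e st)
        (fun σ => I σ ∧ t σ ≤ m ∧ ¬ istrue e σ)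
  | exist {Z : Type} {U V : Z → StatePred} {s : Stmt} :
      (∀ z, TotHoare (U z) s (V z)) →
      TotHoare (fun σ => ∃ z, U z σ) s (fun σ => ∃ z, V z σ)
  | conseq {U U' Z Z' : StatePred} {s : Stmt} :
      (∀ σ, U σ → U' σ) → TotHoare U' s Z' → (∀ σ, Z' σ → Z σ) →
      TotHoare U s Z


/-! ### Auxiliary lemmas -/

lemma single_ne_cons (σ σ' : State) (τ : Trace) :
    Trace.single σ ≠ Trace.cons σ' τ := by
  intro h
  have h2 := congrArg Prod.snd h
  have := congrArg (fun s => Stream'.Seq.get? s 0) h2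
  simp [Trace.single, Trace.cons, Stream'.Seq.get?_nil, Stream'.Seq.get?_cons_zero] at this

lemma single_inj {σ σ' : State} (h : Trace.single σ = Trace.single σ') : σ = σ' :=
  congrArg Prod.fst h

lemma cons_inj {σ σ' : State} {τ τ' : Trace}
    (h : Trace.cons σ τ = Trace.cons σ' τ') : σ = σ' ∧ τ = τ' := by
  have h1 := congrArg Prod.fst h
  have h2 := congrArg Prod.snd h
  simp [Trace.cons] at h1 h2
  obtain ⟨ha, hb⟩ := h2
  exact ⟨h1, Prod.ext ha hb⟩

@[simp] lemma hd_single (σ : State) : (Trace.single σ).hd = σ := rfl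
@[simp] lemma hd_cons (σ : State) (τ : Trace) : (Trace.cons σ τ).hd = σ := rfl

lemma follows_hd {Q : TracePred} {τ τ' : Trace} (h : Follows Q τ τ') :
    τ'.hd = τ.hd := by
  obtain ⟨R, hR, hstep⟩ := h
  rcases hstep _ _ hR with ⟨σ, rfl, hhd, _⟩ | ⟨σ, a', b', rfl, rfl, _⟩
  · simpa using hhd
  · rfl

/-- Key extraction lemma: if `τ` converges to `σ` and `Q` follows `τ` in `τ'`,
and every `Q`-trace with head `σ` converges to a `W`-state, then so does `τ'`. -/
lemma lemA {Q : TracePred} {τ τ' : Trace} {σ : State} {W : StatePred}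
    (hc : Converges τ σ) (hf : Follows Q τ τ')
    (hQ : ∀ b, Q b → b.hd = σ → ∃ σ', Converges b σ' ∧ W σ') :
    ∃ σ', Converges τ' σ' ∧ W σ' := by
  obtain ⟨R, hR, hstep⟩ := hf
  induction hc generalizing τ' with
  | single σ =>
    rcases hstep _ _ hR with ⟨σ₁, ha, hhd, hQ'⟩ | ⟨σ₁, a', b', ha, hb, hR'⟩
    · exact hQ τ' hQ' (by rw [hhd, single_inj ha])
    · exact absurd ha (single_ne_cons _ _ _)
  | cons σ₁ hτ₀ ih =>
    rcases hstep _ _ hR with ⟨σ₂, ha, _, _⟩ | ⟨σ₂, a', b', ha, hb, hR'⟩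
    · exact absurd ha (Ne.symm (single_ne_cons _ _ _))
    · obtain ⟨hσ, hτ⟩ := cons_inj ha
      subst hσ; subst hτ; subst hb
      obtain ⟨σ', hc', hW⟩ := ih hQ hR'
      exact ⟨σ', Converges.cons _ hc', hW⟩

lemma lemC {τ : Trace} {σ : State} {W : StatePred}
    (hc : Converges τ σ) (hW : W σ) : Follows (Sglt W) τ τ := by
  refine ⟨fun a b => a = b ∧ ∃ σ', Converges a σ' ∧ W σ', ⟨rfl, σ, hc, hW⟩, ?_⟩
  rintro a b ⟨rfl, σ', hc', hW'⟩
  cases hc' with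
  | single σ' => exact Or.inl ⟨σ', rfl, rfl, σ', hW', rfl⟩
  | @cons σ'' τ₀ _ h => exact Or.inr ⟨σ'', τ₀, τ₀, rfl, rfl, rfl, σ', h, hW'⟩

lemma lemB {Z : StatePred} {τ : Trace} :
    Chop FiniteT (Sglt Z) τ ↔ ∃ σ, Converges τ σ ∧ Z σ := by
  constructor
  · rintro ⟨τ₀, ⟨σ₀, hc⟩, hf⟩
    exact lemA hc hf (fun b hb _ => by
      obtain ⟨σ₁, hZ, rfl⟩ := hb
      exact ⟨σ₁, Converges.single _, hZ⟩)
  · rintro ⟨σ, hc, hZ⟩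
    exact ⟨τ, ⟨σ, hc⟩, lemC hc hZ⟩

/-- Head-recording lemma for the trace-based Hoare logic. -/
lemma lemH {U : StatePred} {s : Stmt} {P : TracePred} (h : THoare U s P) :
    ∀ σ₀, THoare (fun σ => U σ ∧ σ = σ₀) s (fun τ => P τ ∧ τ.hd = σ₀) := by
  induction h with
  | assign U x e =>
    intro σ₀
    refine THoare.conseq (fun σ h => h) (THoare.assign (fun σ => U σ ∧ σ = σ₀) x e) ?_
    rintro τ ⟨σ, ⟨hU, rfl⟩, rfl⟩
    exact ⟨⟨σ, hU, rfl⟩, rfl⟩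
  | skip U =>
    intro σ₀
    refine THoare.conseq (fun σ h => h) (THoare.skip (fun σ => U σ ∧ σ = σ₀)) ?_
    rintro τ ⟨σ, ⟨hU, rfl⟩, rfl⟩
    exact ⟨⟨σ, hU, rfl⟩, rfl⟩
  | @seq U V s₀ s₁ P Q h₀ h₁ ih₀ ih₁ =>
    intro σ₀
    have h₀' : THoare (fun σ => U σ ∧ σ = σ₀) s₀
        (Chop (fun τ => P τ ∧ τ.hd = σ₀) (Sglt V)) := by
      refine THoare.conseq (fun σ h => h) (ih₀ σ₀) ?_
      rintro τ' ⟨⟨τ₀, hP, hf⟩, hhd⟩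
      exact ⟨τ₀, ⟨hP, (follows_hd hf) ▸ hhd⟩, hf⟩
    refine THoare.conseq (fun σ h => h) (THoare.seq h₀' h₁) ?_
    rintro τ' ⟨τ₀, ⟨hP, hhd⟩, hf⟩
    exact ⟨⟨τ₀, hP, hf⟩, (follows_hd hf).trans hhd⟩
  | @ifte U e st sf P hst hsf ihst ihsf =>
    intro σ₀
    have hst' : THoare (fun σ => istrue e σ ∧ U σ ∧ σ = σ₀) st P :=
      THoare.conseq (fun σ h => ⟨h.1, h.2.1⟩) hst (fun τ h => h)
    have hsf' : THoare (fun σ => ¬ istrue e σ ∧ U σ ∧ σ = σ₀) sf P :=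
      THoare.conseq (fun σ h => ⟨h.1, h.2.1⟩) hsf (fun τ h => h)
    refine THoare.conseq (fun σ h => h) (THoare.ifte hst' hsf') ?_
    rintro τ' ⟨τ₀, ⟨σ, ⟨hU, rfl⟩, rfl⟩, hf⟩
    exact ⟨⟨_, ⟨σ, hU, rfl⟩, hf⟩, follows_hd hf⟩
  | @whileDo U I e st P hUI hst ih =>
    intro σ₀
    refine THoare.conseq (fun σ h => h)
      (THoare.whileDo (U := fun σ => U σ ∧ σ = σ₀) (fun σ h => hUI σ h.1) hst) ?_
    rintro τ' ⟨τ₀, ⟨σ, ⟨hU, rfl⟩, rfl⟩, hf⟩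
    exact ⟨⟨_, ⟨σ, hU, rfl⟩, hf⟩, follows_hd hf⟩
  | @conseq U U' s P P' hUU' h' hPP' ih =>
    intro σ₀
    exact THoare.conseq (fun σ h => ⟨hUU' σ h.1, h.2⟩) (ih σ₀)
      (fun τ h => ⟨hPP' τ h.1, h.2⟩)
  | @exist Zt Uz s Pz h ih =>
    intro σ₀
    refine THoare.conseq ?_ (THoare.exist (fun z => ih z σ₀)) ?_
    · rintro σ ⟨⟨z, hU⟩, rfl⟩; exact ⟨z, hU, rfl⟩
    · rintro τ ⟨z, hP, hhd⟩; exact ⟨⟨z, hP⟩, hhd⟩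

/-- Termination of iteration with a decreasing measure. -/
lemma iter_term {S : TracePred} {I' : StatePred} (t : State → ℕ)
    (hS : ∀ b, S b → ∃ σ', Converges b σ' ∧ I' σ' ∧ t σ' < t b.hd) :
    ∀ τ, Iter S τ → ∃ σf, Converges τ σf ∧ (σf = τ.hd ∨ I' σf) := by
  suffices H : ∀ n τ, t τ.hd = n → Iter S τ →
      ∃ σf, Converges τ σf ∧ (σf = τ.hd ∨ I' σf) by
    exact fun τ h => H _ τ rfl h
  intro n
  induction n using Nat.strong_induction_on with
  | _ n ih =>
    rintro τ hn ⟨X, hX, hstep⟩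
    rcases hstep τ hX with ⟨σ, _, rfl⟩ | ⟨τ₀, hSτ₀, hf⟩
    · exact ⟨σ, Converges.single σ, Or.inl rfl⟩
    · obtain ⟨σ', hc₀, hI', hlt⟩ := hS τ₀ hSτ₀
      have hhd := follows_hd hf
      have hQb : ∀ b, X b → b.hd = σ' → ∃ σf, Converges b σf ∧ I' σf := by
        intro b hXb hbhd
        have hIb : Iter S b := ⟨X, hXb, hstep⟩
        have hblt : t b.hd < n := by rw [hbhd, ← hn, hhd]; exact hlt
        obtain ⟨σf, hcf, h⟩ := ih (t b.hd) hblt b rfl hIb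
        rcases h with rfl | hI
        · exact ⟨b.hd, hcf, by rw [hbhd]; exact hI'⟩
        · exact ⟨σf, hcf, hI⟩
      obtain ⟨σf, hcf, hWf⟩ := lemA (W := I') hc₀ hf hQb
      exact ⟨σf, hcf, Or.inr hWf⟩

/-- Embedding of the total-correctness Hoare logic. -/
theorem totHoare_embed (s : Stmt) (U Z : StatePred) (h : TotHoare U s Z) :
    THoare U s (Chop FiniteT (Sglt Z)) := by
  induction h with
  | assign Z x e =>
    refine THoare.conseq (fun σ h => h) (THoare.assign _ x e) ?_
    rintro τ ⟨σ, hZ, rfl⟩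
    exact lemB.mpr ⟨_, Converges.cons _ (Converges.single _), hZ⟩
  | skip U =>
    refine THoare.conseq (fun σ h => h) (THoare.skip U) ?_
    rintro τ ⟨σ, hU, rfl⟩
    exact lemB.mpr ⟨σ, Converges.single σ, hU⟩
  | @seq U V Z s₀ s₁ h₀ h₁ ih₀ ih₁ =>
    refine THoare.conseq (fun σ h => h) (THoare.seq ih₀ ih₁) ?_
    rintro τ' ⟨τ₀, ⟨σ₀, hc⟩, hf⟩
    exact lemB.mpr (lemA hc hf (fun b hb _ => lemB.mp hb))
  | @ifte U Z e st sf hst hsf ihst ihsf =>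
    refine THoare.conseq (fun σ h => h) (THoare.ifte ihst ihsf) ?_
    rintro τ' ⟨τ₀, ⟨σ, hU, rfl⟩, hf⟩
    exact lemB.mpr (lemA (Converges.cons σ (Converges.single σ)) hf
      (fun b hb _ => lemB.mp hb))
  | @whileFun I e st t m hbody ihbody =>
    set I' : StatePred := fun σ => I σ ∧ t σ ≤ m with hI'def
    set P' : TracePred := fun τ => ∃ σ', Converges τ σ' ∧ t σ' < t τ.hd with hP'def
    have hz : ∀ z : {σ : State // t σ ≤ m},
        THoare (fun σ => (istrue e σ ∧ I σ ∧ t σ = t z.1) ∧ σ = z.1) st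
          (Chop P' (Sglt I')) := by
      intro z
      refine THoare.conseq (fun σ h => h) (lemH (ihbody (t z.1)) z.1) ?_
      rintro τ ⟨hchop, hhd⟩
      obtain ⟨σ', hc, hI, hlt⟩ := lemB.mp hchop
      exact ⟨τ, ⟨σ', hc, by rw [hhd]; exact hlt⟩,
        lemC hc ⟨hI, le_of_lt (lt_of_lt_of_le hlt z.2)⟩⟩
    have hbody'' : THoare (fun σ => istrue e σ ∧ I' σ) st (Chop P' (Sglt I')) := by
      refine THoare.conseq ?_ (THoare.exist hz) ?_
      · rintro σ ⟨he, hI, hm⟩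
        exact ⟨⟨σ, hm⟩, ⟨he, hI, rfl⟩, rfl⟩
      · rintro τ ⟨z, hP⟩; exact hP
    have hwhile := THoare.whileDo (U := fun σ => I σ ∧ t σ = m)
      (fun σ h => ⟨h.1, le_of_eq h.2⟩) hbody''
    refine THoare.conseq (fun σ h => h) hwhile ?_
    rintro τ ⟨τ₁, ⟨σ₀, hU, rfl⟩, hf⟩
    apply lemB.mpr
    refine lemA (Converges.cons σ₀ (Converges.single σ₀)) hf ?_
    rintro b ⟨τ₂, hIter, hf₂⟩ hbhd
    have hSconv : ∀ c, Chop P' (Dup I') c →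
        ∃ σ', Converges c σ' ∧ I' σ' ∧ t σ' < t c.hd := by
      rintro c ⟨τ₃, ⟨σ', hc₃, hlt⟩, hf₃⟩
      have hhd₃ := follows_hd hf₃
      refine lemA hc₃ hf₃ ?_
      rintro d ⟨σ₁, hI₁, rfl⟩ hdhd
      simp only [hd_cons] at hdhd
      refine ⟨σ₁, Converges.cons _ (Converges.single _), hI₁, ?_⟩
      rw [hhd₃, hdhd]; exact hlt
    obtain ⟨σm, hcm, hm⟩ := iter_term t hSconv τ₂ hIter
    have hI'm : I σm ∧ t σm ≤ m := by
      rcases hm with rfl | hI'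
      · have : τ₂.hd = σ₀ := (follows_hd hf₂).symm.trans hbhd
        rw [this]; exact ⟨hU.1, le_of_eq hU.2⟩
      · exact hI'
    refine lemA hcm hf₂ ?_
    rintro d ⟨σ₁, hne, rfl⟩ hdhd
    simp only [hd_single] at hdhd
    exact ⟨σ₁, Converges.single _, hdhd ▸ hI'm.1, hdhd ▸ hI'm.2, hne⟩
  | @exist Zt Uz Vz s' h ih =>
    refine THoare.conseq (fun σ h => h) (THoare.exist ih) ?_
    rintro τ ⟨z, hP⟩
    obtain ⟨σ, hc, hV⟩ := lemB.mp hP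
    exact lemB.mpr ⟨σ, hc, z, hV⟩
  | @conseq U U' Z Z' s' hUU' h' hZZ' ih =>
    refine THoare.conseq hUU' ih ?_
    intro τ hP
    obtain ⟨σ, hc, hZ⟩ := lemB.mp hP
    exact lemB.mpr ⟨σ, hc, hZZ' σ hZ⟩

end WhileTrace
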